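/- arXiv:2501.17440 — 4 statements merged into one kernel-verified Lean document; each statement's English description precedes it below -/
import Mathlib

section
/- Let d ≥ 1 be an integer and β, κ > 0, and set η₁ := (2^{-(12+7β)/(2+β)}·β·√κ)^{1/(2+β)}. There exists a constant C ≥ 1 such that for all t ∈ (0,1] and all x, y ∈ ℝ^d \ {0} with |y| ≥ |x| ≥ η₁·t^{1/(2+β)}: t/(min(|x|,1))^{2+2β} ≤ C·|x-y|²/t + 2t/|y|^{2+2β} + 1. -/
noncomputable section

/-- `η₁ = η₁(β,κ) := (2^{-(12+7β)/(2+β)} · β · √κ)^{1/(2+β)}`. -/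
def eta1 (β κ : ℝ) : ℝ :=
  ((2 : ℝ) ^ (-(12 + 7 * β) / (2 + β)) * β * Real.sqrt κ) ^ (1 / (2 + β))

theorem stmt7 (d : ℕ) (hd : 1 ≤ d) (β κ : ℝ) (hβ : 0 < β) (hκ : 0 < κ) :
    ∃ C : ℝ, 1 ≤ C ∧ ∀ t : ℝ, t ∈ Set.Ioc (0 : ℝ) 1 →
      ∀ x y : EuclideanSpace ℝ (Fin d), x ≠ 0 → y ≠ 0 →
        eta1 β κ * t ^ (1 / (2 + β)) ≤ ‖x‖ → ‖x‖ ≤ ‖y‖ →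
          t / (min ‖x‖ 1) ^ (2 + 2 * β) ≤
            C * ‖x - y‖ ^ 2 / t + 2 * t / ‖y‖ ^ (2 + 2 * β) + 1 := by
  have hβ2 : (0:ℝ) < 2 + β := by linarith
  have hp : (0:ℝ) < 2 + 2 * β := by linarith
  set c : ℝ := (2:ℝ) ^ ((1:ℝ)/(2+2*β)) with hc
  have hc1 : 1 < c := by
    rw [hc]
    exact Real.one_lt_rpow_iff_of_pos (by norm_num) |>.2 (Or.inl ⟨by norm_num, by positivity⟩)
  have hη : 0 < eta1 β κ := by
    unfold eta1
    have hb : (0:ℝ) < (2 : ℝ) ^ (-(12 + 7 * β) / (2 + β)) * β * Real.sqrt κ := by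
      have := Real.rpow_pos_of_pos (show (0:ℝ) < 2 by norm_num) (-(12 + 7 * β) / (2 + β))
      have := Real.sqrt_pos.2 hκ
      positivity
    exact Real.rpow_pos_of_pos hb _
  set E : ℝ := (eta1 β κ) ^ ((4:ℝ) + 2*β) with hE
  have hE0 : 0 < E := Real.rpow_pos_of_pos hη _
  refine ⟨max 1 (1/((c-1)^2 * E)), le_max_left _ _, ?_⟩
  intro t ht x y hx0 hy0 hxt hxy
  have ht0 : 0 < t := ht.1
  have hx : 0 < ‖x‖ := norm_pos_iff.2 hx0
  have hy : 0 < ‖y‖ := norm_pos_iff.2 hy0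
  have hCpos : (0:ℝ) < max 1 (1/((c-1)^2 * E)) :=
    lt_of_lt_of_le one_pos (le_max_left _ _)
  have hyp : 0 < ‖y‖ ^ (2+2*β) := Real.rpow_pos_of_pos hy _
  have hterm1 : (0:ℝ) ≤ max 1 (1/((c-1)^2 * E)) * ‖x-y‖^2 / t := by positivity
  have hterm2 : (0:ℝ) ≤ 2*t / ‖y‖^(2+2*β) := le_of_lt (by positivity)
  by_cases hx1 : 1 ≤ ‖x‖
  · have hm : min ‖x‖ 1 = 1 := min_eq_right hx1
    rw [hm, Real.one_rpow, div_one]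
    linarith [ht.2]
  · push_neg at hx1
    have hmin : min ‖x‖ 1 = ‖x‖ := min_eq_left hx1.le
    rw [hmin]
    have hxp : 0 < ‖x‖^(2+2*β) := Real.rpow_pos_of_pos hx _
    by_cases hcase : ‖y‖^(2+2*β) ≤ 2 * ‖x‖^(2+2*β)
    · have key : t / ‖x‖^(2+2*β) ≤ 2*t/‖y‖^(2+2*β) := by
        rw [div_le_div_iff₀ hxp hyp]
        calc t * ‖y‖^(2+2*β) ≤ t * (2*‖x‖^(2+2*β)) :=
              mul_le_mul_of_nonneg_left hcase ht0.le
          _ = 2*t*‖x‖^(2+2*β) := by ring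
      linarith
    · push_neg at hcase
      have hcpow : (c*‖x‖)^(2+2*β) = 2 * ‖x‖^(2+2*β) := by
        rw [Real.mul_rpow (by positivity) hx.le, hc, ← Real.rpow_mul (by norm_num),
          one_div, inv_mul_cancel₀ hp.ne', Real.rpow_one]
      have hcx : c * ‖x‖ < ‖y‖ := by
        by_contra h
        push_neg at h
        have := Real.rpow_le_rpow hy.le h hp.le
        rw [hcpow] at this
        linarith
      -- norm estimate
      have hxy2 : (c-1)*‖x‖ ≤ ‖x - y‖ := by
        have h1 : ‖y‖ - ‖x‖ ≤ ‖y - x‖ := norm_sub_norm_le y x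
        rw [norm_sub_rev] at h1
        nlinarith
      have hsq : ((c-1)*‖x‖)^2 ≤ ‖x - y‖^2 := by
        have h0 : (0:ℝ) ≤ (c-1)*‖x‖ := by nlinarith
        exact pow_le_pow_left₀ h0 hxy2 2
      -- x norm lower bound
      have hxlow : E * t^2 ≤ ‖x‖ ^ ((4:ℝ) + 2*β) := by
        have h1 : (eta1 β κ * t ^ (1/(2+β))) ^ ((4:ℝ)+2*β) ≤ ‖x‖ ^ ((4:ℝ)+2*β) := by
          apply Real.rpow_le_rpow (by positivity) hxt (by positivity)
        have hexp : (1/(2+β))*((4:ℝ)+2*β) = (2:ℝ) := by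
          field_simp
          ring
        calc E * t^2 = (eta1 β κ * t ^ (1/(2+β))) ^ ((4:ℝ)+2*β) := by
              rw [Real.mul_rpow hη.le (by positivity), ← Real.rpow_mul ht0.le, hexp, hE,
                show (2:ℝ) = ((2:ℕ):ℝ) by norm_num, Real.rpow_natCast]
          _ ≤ _ := h1
      have hsplit : ‖x‖ ^ ((4:ℝ) + 2*β) = ‖x‖^2 * ‖x‖^(2+2*β) := by
        rw [← Real.rpow_natCast ‖x‖ 2, ← Real.rpow_add hx]
        congr 1
        push_cast
        ring
      have key : t / ‖x‖^(2+2*β) ≤ max 1 (1/((c-1)^2 * E)) * ‖x-y‖^2 / t := by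
        have step1 : t / ‖x‖^(2+2*β) ≤ ‖x‖^2 / (E * t) := by
          rw [div_le_div_iff₀ hxp (by positivity)]
          calc t * (E * t) = E * t^2 := by ring
            _ ≤ ‖x‖ ^ ((4:ℝ)+2*β) := hxlow
            _ = ‖x‖^2 * ‖x‖^(2+2*β) := hsplit
        have hC2 : 1/((c-1)^2 * E) ≤ max 1 (1/((c-1)^2 * E)) := le_max_right _ _
        have step2 : ‖x‖^2 / (E*t) ≤ max 1 (1/((c-1)^2 * E)) * ‖x-y‖^2 / t := by
          rw [div_le_div_iff₀ (by positivity) ht0]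
          have hc0 : (0:ℝ) < (c-1)^2 := by nlinarith
          have h3 : ((c-1)*‖x‖)^2 * ((c-1)^2*E)⁻¹ ≤
              max 1 (1/((c-1)^2 * E)) * ‖x-y‖^2 := by
            calc ((c-1)*‖x‖)^2 * ((c-1)^2*E)⁻¹
                ≤ ‖x-y‖^2 * (1/((c-1)^2 * E)) := by
                  rw [one_div]
                  exact mul_le_mul_of_nonneg_right hsq (by positivity)
              _ ≤ max 1 (1/((c-1)^2 * E)) * ‖x-y‖^2 := by
                  rw [mul_comm]
                  exact mul_le_mul_of_nonneg_right hC2 (by positivity)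
          calc ‖x‖^2 * t = (((c-1)*‖x‖)^2 * ((c-1)^2*E)⁻¹) * (E*t) := by
                field_simp [sub_ne_zero.2 hc1.ne']
            _ ≤ (max 1 (1/((c-1)^2 * E)) * ‖x-y‖^2) * (E*t) := by
                exact mul_le_mul_of_nonneg_right h3 (by positivity)
            _ = max 1 (1/((c-1)^2 * E)) * ‖x-y‖^2 * (E*t) := by ring
        calc t / ‖x‖^(2+2*β) ≤ ‖x‖^2 / (E*t) := step1
          _ ≤ _ := step2
      linarith

end
end

section
/- For any a > 0 there exists a constant C = C(a) > 0 such that for all r, R > 0: ∫₀^r t^{-a/2}·e^{-R/t} dt ≤ C·r·e^{-R/(2r)}/(R/2)^{a/2}. -/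
open MeasureTheory

noncomputable section

lemma aux_rpow_exp (b u : ℝ) (hb : 0 < b) (hu : 0 < u) :
    u ^ b * Real.exp (-u) ≤ b ^ b * Real.exp (-b) := by
  have h1 : u / b ≤ Real.exp (u / b - 1) := by
    have := Real.add_one_le_exp (u / b - 1); linarith
  have h2 : (u / b) ^ b ≤ (Real.exp (u / b - 1)) ^ b :=
    Real.rpow_le_rpow (by positivity) h1 hb.le
  rw [Real.div_rpow hu.le hb.le, ← Real.exp_mul] at h2
  have hexp : (u / b - 1) * b = u - b := by field_simp
  rw [hexp] at h2
  have hbb : (0:ℝ) < b ^ b := Real.rpow_pos_of_pos hb b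
  have h3 : u ^ b ≤ b ^ b * Real.exp (u - b) := by
    rw [div_le_iff₀ hbb] at h2; linarith [h2]
  calc u ^ b * Real.exp (-u) ≤ b ^ b * Real.exp (u - b) * Real.exp (-u) := by
        exact mul_le_mul_of_nonneg_right h3 (Real.exp_pos _).le
    _ = b ^ b * Real.exp (-b) := by
        rw [mul_assoc, ← Real.exp_add]; ring_nf

theorem stmt12 (a : ℝ) (ha : 0 < a) :
    ∃ C : ℝ, 0 < C ∧ ∀ r R : ℝ, 0 < r → 0 < R →
      ∫ t in Set.Ioc (0 : ℝ) r, t ^ (-a / 2) * Real.exp (-R / t) ≤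
        C * r * Real.exp (-R / (2 * r)) / (R / 2) ^ (a / 2) := by
  set b := a / 2 with hb_def
  have hb : 0 < b := by positivity
  refine ⟨b ^ b * Real.exp (-b), by positivity, fun r R hr hR => ?_⟩
  set M := b ^ b * Real.exp (-b) with hM_def
  have hM : 0 < M := by positivity
  have hRb : (0:ℝ) < (R / 2) ^ b := Real.rpow_pos_of_pos (by linarith) b
  set K := M * Real.exp (-R / (2 * r)) / (R / 2) ^ b with hK_def
  have hbound : ∀ t ∈ Set.Ioc (0:ℝ) r, ‖t ^ (-a / 2) * Real.exp (-R / t)‖ ≤ K := by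
    intro t ht
    obtain ⟨ht0, htr⟩ := ht
    have htpos : (0:ℝ) < t ^ (-a / 2) := Real.rpow_pos_of_pos ht0 _
    rw [Real.norm_eq_abs, abs_of_nonneg (by positivity)]
    -- split exp: -R/t = -(R/(2t)) + -(R/(2t))
    have hsplit : Real.exp (-R / t) = Real.exp (-(R / (2 * t))) * Real.exp (-(R / (2 * t))) := by
      rw [← Real.exp_add]; congr 1; field_simp; ring
    -- bound second factor by exp(-R/(2r))
    have hmono : Real.exp (-(R / (2 * t))) ≤ Real.exp (-(R / (2 * r))) := by
      apply Real.exp_le_exp.2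
      have : R / (2 * r) ≤ R / (2 * t) :=
        div_le_div_of_nonneg_left hR.le (by linarith) (by linarith)
      linarith
    -- main: t^{-b} * exp(-(R/(2t))) ≤ M / (R/2)^b
    have hu : (0:ℝ) < R / (2 * t) := by positivity
    have key := aux_rpow_exp b (R / (2 * t)) hb hu
    have hrw : (R / (2 * t)) ^ b = (R / 2) ^ b * t ^ (-b) := by
      rw [show R / (2 * t) = (R / 2) / t by ring, Real.div_rpow (by linarith) ht0.le,
        Real.rpow_neg ht0.le, div_eq_mul_inv]
    rw [hrw] at key
    have hmain : t ^ (-b) * Real.exp (-(R / (2 * t))) ≤ M / (R / 2) ^ b := by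
      rw [le_div_iff₀ hRb]
      calc t ^ (-b) * Real.exp (-(R / (2 * t))) * (R / 2) ^ b
          = (R / 2) ^ b * t ^ (-b) * Real.exp (-(R / (2 * t))) := by ring
        _ ≤ M := key
    have hab : -a / 2 = -b := by rw [hb_def]; ring
    calc t ^ (-a / 2) * Real.exp (-R / t)
        = (t ^ (-b) * Real.exp (-(R / (2 * t)))) * Real.exp (-(R / (2 * t))) := by
          rw [hab, hsplit]; ring
      _ ≤ (M / (R / 2) ^ b) * Real.exp (-(R / (2 * r))) := by
          apply mul_le_mul hmain hmono (Real.exp_pos _).le (by positivity)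
      _ = K := by rw [hK_def]; rw [show -(R / (2 * r)) = -R / (2 * r) by ring]; ring
  have hs : volume (Set.Ioc (0:ℝ) r) < ⊤ := by
    rw [Real.volume_Ioc]; exact ENNReal.ofReal_lt_top
  have this : ‖∫ t in Set.Ioc (0 : ℝ) r, t ^ (-a / 2) * Real.exp (-R / t)‖ ≤
      K * (volume (Set.Ioc (0:ℝ) r)).toReal := norm_setIntegral_le_of_norm_le_const_ae' (μ := volume)
    (f := fun t => t ^ (-a / 2) * Real.exp (-R / t)) (C := K) hs
    (Filter.Eventually.of_forall hbound)
  have hvol : (volume (Set.Ioc (0:ℝ) r)).toReal = r := by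
    rw [Real.volume_Ioc, ENNReal.toReal_ofReal (by linarith)]; ring
  rw [hvol] at this
  have hle : ∫ t in Set.Ioc (0 : ℝ) r, t ^ (-a / 2) * Real.exp (-R / t) ≤ K * r :=
    le_trans (le_abs_self _) this
  calc ∫ t in Set.Ioc (0 : ℝ) r, t ^ (-a / 2) * Real.exp (-R / t) ≤ K * r := hle
    _ = M * r * Real.exp (-R / (2 * r)) / (R / 2) ^ b := by rw [hK_def]; ring

end
end

section
/- Let d ≥ 3 be an integer and γ > 0. There exists a constant C > 0 such that for all R > 0 and all w ∈ ℝ^d with |w| ≥ 2R: ∫_{|z|>R} |w-z|^{2-d}·|z|^{-2-γ} dz ≤ C·R^{-γ}. -/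
open MeasureTheory

noncomputable section

section Aux

open MeasureTheory.Measure Set Metric
open scoped ENNReal

lemma lintegral_norm_addHaar_aux {E : Type*} [NormedAddCommGroup E] [NormedSpace ℝ E]
    [MeasurableSpace E] [BorelSpace E] [Nontrivial E] [FiniteDimensional ℝ E]
    (μ : Measure E) [μ.IsAddHaarMeasure] (f : ℝ → ℝ≥0∞) (hf : Measurable f) :
    ∫⁻ x, f ‖x‖ ∂μ = μ.toSphere univ *
      ∫⁻ y in Ioi (0:ℝ), ENNReal.ofReal (y ^ (Module.finrank ℝ E - 1)) * f y :=
  calc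
    ∫⁻ x, f ‖x‖ ∂μ = ∫⁻ x : ({0}ᶜ : Set E), f ‖(x : E)‖ ∂(μ.comap (↑)) := by
      rw [lintegral_subtype_comap (measurableSet_singleton (0:E)).compl
        (fun x => f ‖x‖), MeasureTheory.restrict_compl_singleton]
    _ = ∫⁻ p : sphere (0:E) 1 × Ioi (0:ℝ), f p.2
        ∂(μ.toSphere.prod (volumeIoiPow (Module.finrank ℝ E - 1))) := by
      simpa only [homeomorphUnitSphereProd_apply_snd_coe, div_one] using
      (μ.measurePreserving_homeomorphUnitSphereProd).lintegral_comp
        (f := fun p : sphere (0:E) 1 × Ioi (0:ℝ) => f p.2)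
        (hf.comp (measurable_subtype_coe.comp measurable_snd))
    _ = μ.toSphere univ * ∫⁻ y : Ioi (0:ℝ), f y
        ∂(volumeIoiPow (Module.finrank ℝ E - 1)) := by
      rw [lintegral_prod (fun p : sphere (0:E) 1 × Ioi (0:ℝ) => f p.2)
        ((hf.comp (measurable_subtype_coe.comp measurable_snd)).aemeasurable)]
      simp [lintegral_const, mul_comm]
    _ = μ.toSphere univ *
        ∫⁻ y in Ioi (0:ℝ), ENNReal.ofReal (y ^ (Module.finrank ℝ E - 1)) * f y := by
      congr 1
      rw [Measure.volumeIoiPow, lintegral_withDensity_eq_lintegral_mul _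
        ((measurable_subtype_coe.pow_const _).ennreal_ofReal)
        (g := fun y : Ioi (0:ℝ) => f y) (hf.comp measurable_subtype_coe)]
      rw [← lintegral_subtype_comap measurableSet_Ioi
        (fun y => ENNReal.ofReal (y ^ (Module.finrank ℝ E - 1)) * f y)]
      simp [Pi.mul_apply]


lemma aux_tail (d : ℕ) (hd : 3 ≤ d) (γ R : ℝ) (hγ : 0 < γ) (hR : 0 < R) :
    ∫⁻ z in {z : EuclideanSpace ℝ (Fin d) | R < ‖z‖},
        ENNReal.ofReal (‖z‖ ^ (-(d:ℝ) - γ)) ∂volume =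
      (volume : Measure (EuclideanSpace ℝ (Fin d))).toSphere univ *
        ENNReal.ofReal (R ^ (-γ) / γ) := by
  haveI : Nonempty (Fin d) := ⟨⟨0, by omega⟩⟩
  set S := {z : EuclideanSpace ℝ (Fin d) | R < ‖z‖} with hS
  have hSm : MeasurableSet S := (isOpen_lt continuous_const continuous_norm).measurableSet
  have hd' : (1:ℕ) ≤ d := by omega
  have hdr : (3:ℝ) ≤ (d:ℝ) := by exact_mod_cast hd
  have hind : ∀ z : EuclideanSpace ℝ (Fin d),
      (Ioi R).indicator (fun y => ENNReal.ofReal (y ^ (-(d:ℝ) - γ))) ‖z‖ =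
      S.indicator (fun z : EuclideanSpace ℝ (Fin d) =>
        ENNReal.ofReal (‖z‖ ^ (-(d:ℝ) - γ))) z := by
    intro z
    by_cases h : R < ‖z‖ <;> simp [Set.indicator, h, hS]
  have hmf : Measurable ((Ioi R).indicator (fun y : ℝ => ENNReal.ofReal (y ^ (-(d:ℝ) - γ)))) :=
    Measurable.indicator ((by fun_prop : Measurable fun y : ℝ => y ^ (-(d:ℝ) - γ)).ennreal_ofReal)
      measurableSet_Ioi
  calc
    ∫⁻ z in S, ENNReal.ofReal (‖z‖ ^ (-(d:ℝ) - γ)) ∂volume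
        = ∫⁻ z, S.indicator (fun z : EuclideanSpace ℝ (Fin d) =>
            ENNReal.ofReal (‖z‖ ^ (-(d:ℝ) - γ))) z ∂volume := (lintegral_indicator hSm _).symm
    _ = ∫⁻ z : EuclideanSpace ℝ (Fin d),
          (Ioi R).indicator (fun y => ENNReal.ofReal (y ^ (-(d:ℝ) - γ))) ‖z‖ ∂volume :=
        (lintegral_congr hind).symm
    _ = (volume : Measure (EuclideanSpace ℝ (Fin d))).toSphere univ *
          ∫⁻ y in Ioi (0:ℝ), ENNReal.ofReal (y ^ (d - 1)) *
            (Ioi R).indicator (fun y => ENNReal.ofReal (y ^ (-(d:ℝ) - γ))) y := by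
        rw [lintegral_norm_addHaar_aux volume _ hmf, finrank_euclideanSpace_fin]
    _ = (volume : Measure (EuclideanSpace ℝ (Fin d))).toSphere univ *
          ENNReal.ofReal (R ^ (-γ) / γ) := by
        congr 1
        have h1 : ∀ y : ℝ, ENNReal.ofReal (y ^ (d - 1)) *
              (Ioi R).indicator (fun y => ENNReal.ofReal (y ^ (-(d:ℝ) - γ))) y =
            (Ioi R).indicator (fun y =>
              ENNReal.ofReal (y ^ (d - 1)) * ENNReal.ofReal (y ^ (-(d:ℝ) - γ))) y := by
          intro y; by_cases h : y ∈ Ioi R <;> simp [Set.indicator, h]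
        rw [lintegral_congr h1, lintegral_indicator measurableSet_Ioi,
          Measure.restrict_restrict measurableSet_Ioi, Ioi_inter_Ioi,
          max_eq_left hR.le]
        have h2 : ∀ y ∈ Ioi R, ENNReal.ofReal (y ^ (d - 1)) * ENNReal.ofReal (y ^ (-(d:ℝ) - γ))
            = ENNReal.ofReal (y ^ (-1 - γ)) := by
          intro y hy
          have hy0 : (0:ℝ) < y := hR.trans hy
          rw [← ENNReal.ofReal_mul (by positivity)]
          congr 1
          have : (y : ℝ) ^ (d - 1 : ℕ) = y ^ ((d:ℝ) - 1) := by
            rw [← Real.rpow_natCast]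
            congr 1
            push_cast [Nat.cast_sub hd']
            ring
          rw [this, ← Real.rpow_add hy0]
          congr 1
          ring
        rw [setLIntegral_congr_fun measurableSet_Ioi h2]
        rw [← MeasureTheory.ofReal_integral_eq_lintegral_ofReal
          (integrableOn_Ioi_rpow_of_lt (by linarith) hR)
          ((ae_restrict_iff' measurableSet_Ioi).2 (ae_of_all _ fun y hy =>
            Real.rpow_nonneg (hR.trans hy).le _))]
        congr 1
        rw [integral_Ioi_rpow_of_lt (by linarith) hR]
        have : (-1 - γ + 1) = -γ := by ring
        rw [this]
        rw [div_eq_div_iff (by linarith) hγ.ne']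
        ring

lemma aux_ball (d : ℕ) (hd : 3 ≤ d) (r : ℝ) (hr : 0 < r) :
    ∫⁻ z in ball (0 : EuclideanSpace ℝ (Fin d)) r,
        ENNReal.ofReal (‖z‖ ^ ((2:ℝ) - d)) ∂volume ≤
      (volume : Measure (EuclideanSpace ℝ (Fin d))).toSphere univ *
        ENNReal.ofReal (r * r) := by
  haveI : Nonempty (Fin d) := ⟨⟨0, by omega⟩⟩
  have hd' : (1:ℕ) ≤ d := by omega
  have hind : ∀ z : EuclideanSpace ℝ (Fin d),
      (Iio r).indicator (fun y => ENNReal.ofReal (y ^ ((2:ℝ) - d))) ‖z‖ =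
      (ball (0 : EuclideanSpace ℝ (Fin d)) r).indicator
        (fun z : EuclideanSpace ℝ (Fin d) => ENNReal.ofReal (‖z‖ ^ ((2:ℝ) - d))) z := by
    intro z
    by_cases h : ‖z‖ < r <;> simp [Set.indicator, h, mem_ball_zero_iff]
  have hmf : Measurable ((Iio r).indicator (fun y : ℝ => ENNReal.ofReal (y ^ ((2:ℝ) - d)))) :=
    Measurable.indicator ((by fun_prop : Measurable fun y : ℝ => y ^ ((2:ℝ) - d)).ennreal_ofReal)
      measurableSet_Iio
  have heq : ∫⁻ z in ball (0 : EuclideanSpace ℝ (Fin d)) r,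
      ENNReal.ofReal (‖z‖ ^ ((2:ℝ) - d)) ∂volume =
      (volume : Measure (EuclideanSpace ℝ (Fin d))).toSphere univ *
        ∫⁻ y in Ioo (0:ℝ) r, ENNReal.ofReal (y ^ (d - 1)) * ENNReal.ofReal (y ^ ((2:ℝ) - d)) := by
    rw [← lintegral_indicator measurableSet_ball, ← lintegral_congr hind,
      lintegral_norm_addHaar_aux volume _ hmf, finrank_euclideanSpace_fin]
    congr 1
    have h1 : ∀ y : ℝ, ENNReal.ofReal (y ^ (d - 1)) *
          (Iio r).indicator (fun y => ENNReal.ofReal (y ^ ((2:ℝ) - d))) y =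
        (Iio r).indicator (fun y =>
          ENNReal.ofReal (y ^ (d - 1)) * ENNReal.ofReal (y ^ ((2:ℝ) - d))) y := by
      intro y; by_cases h : y ∈ Iio r <;> simp [Set.indicator, h]
    rw [lintegral_congr h1, lintegral_indicator measurableSet_Iio,
      Measure.restrict_restrict measurableSet_Iio, Iio_inter_Ioi]
  rw [heq]
  refine mul_le_mul_right ?_ _
  have hb : ∀ y ∈ Ioo (0:ℝ) r, ENNReal.ofReal (y ^ (d - 1)) * ENNReal.ofReal (y ^ ((2:ℝ) - d))
      ≤ ENNReal.ofReal r := by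
    intro y hy
    have hy0 : (0:ℝ) < y := hy.1
    rw [← ENNReal.ofReal_mul (pow_nonneg hy0.le _)]
    apply ENNReal.ofReal_le_ofReal
    have h1 : (y : ℝ) ^ (d - 1 : ℕ) = y ^ ((d:ℝ) - 1) := by
      rw [← Real.rpow_natCast]; congr 1; push_cast [Nat.cast_sub hd']; ring
    rw [h1, ← Real.rpow_add hy0]
    have h2 : ((d:ℝ) - 1 + ((2:ℝ) - d)) = 1 := by ring
    rw [h2, Real.rpow_one]
    exact hy.2.le
  calc ∫⁻ y in Ioo (0:ℝ) r, ENNReal.ofReal (y ^ (d - 1)) * ENNReal.ofReal (y ^ ((2:ℝ) - d))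
      ≤ ∫⁻ _ in Ioo (0:ℝ) r, ENNReal.ofReal r := setLIntegral_mono measurable_const hb
    _ = ENNReal.ofReal r * volume (Ioo (0:ℝ) r) := setLIntegral_const _ _
    _ = ENNReal.ofReal (r * r) := by
        rw [Real.volume_Ioo, sub_zero, ← ENNReal.ofReal_mul hr.le]

theorem stmt13 (d : ℕ) (hd : 3 ≤ d) (γ : ℝ) (hγ : 0 < γ) :
    ∃ C : ℝ, 0 < C ∧ ∀ R : ℝ, 0 < R → ∀ w : EuclideanSpace ℝ (Fin d), 2 * R ≤ ‖w‖ →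
      ∫ z in {z : EuclideanSpace ℝ (Fin d) | R < ‖z‖},
          ‖w - z‖ ^ ((2 : ℝ) - d) * ‖z‖ ^ (-2 - γ) ≤
        C * R ^ (-γ) := by
  haveI : Nonempty (Fin d) := ⟨⟨0, by omega⟩⟩
  have hdr : (3:ℝ) ≤ (d:ℝ) := by exact_mod_cast hd
  set T : ℝ≥0∞ := (volume : Measure (EuclideanSpace ℝ (Fin d))).toSphere univ with hTdef
  have hTfin : T ≠ ⊤ := measure_ne_top _ _
  set t : ℝ := T.toReal with htdef
  have hTt : T = ENNReal.ofReal t := (ENNReal.ofReal_toReal hTfin).symm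
  have ht0 : 0 ≤ t := ENNReal.toReal_nonneg
  set c1 : ℝ := (2:ℝ) ^ ((d:ℝ) - 2) with hc1
  have hc10 : 0 < c1 := Real.rpow_pos_of_pos (by norm_num) _
  set A : ℝ := (2/3:ℝ) ^ (-2 - γ) * (2:ℝ) ^ (-γ) with hA
  have hA0 : 0 < A := by positivity
  refine ⟨t * (c1 / γ + A) + 1, by positivity, ?_⟩
  intro R hR w hw
  have hw0 : 0 < ‖w‖ := lt_of_lt_of_le (by linarith) hw
  have hRγ : 0 < R ^ (-γ) := Real.rpow_pos_of_pos hR _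
  set S := {z : EuclideanSpace ℝ (Fin d) | R < ‖z‖} with hS
  have hSm : MeasurableSet S := (isOpen_lt continuous_const continuous_norm).measurableSet
  set f : EuclideanSpace ℝ (Fin d) → ℝ :=
    fun z => ‖w - z‖ ^ ((2:ℝ) - d) * ‖z‖ ^ (-2 - γ) with hf
  have hf_nonneg : ∀ z, 0 ≤ f z := fun z =>
    mul_nonneg (Real.rpow_nonneg (norm_nonneg _) _) (Real.rpow_nonneg (norm_nonneg _) _)
  have hf_meas : Measurable f := by fun_prop
  set c2 : ℝ := ((2/3:ℝ) * ‖w‖) ^ (-2 - γ) with hc2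
  have hc20 : 0 < c2 := Real.rpow_pos_of_pos (by positivity) _
  set g1 : EuclideanSpace ℝ (Fin d) → ℝ≥0∞ :=
    fun z => ENNReal.ofReal c1 * ENNReal.ofReal (‖z‖ ^ (-(d:ℝ) - γ)) with hg1
  set g2 : EuclideanSpace ℝ (Fin d) → ℝ≥0∞ :=
    fun z => (ball w ‖w‖).indicator
      (fun z => ENNReal.ofReal c2 * ENNReal.ofReal (‖w - z‖ ^ ((2:ℝ) - d))) z with hg2
  have hg1m : Measurable g1 :=
    measurable_const.mul ((by fun_prop : Measurable fun z : EuclideanSpace ℝ (Fin d) =>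
      ‖z‖ ^ (-(d:ℝ) - γ)).ennreal_ofReal)
  have hg2m : Measurable g2 :=
    (measurable_const.mul ((by fun_prop : Measurable fun z : EuclideanSpace ℝ (Fin d) =>
      ‖w - z‖ ^ ((2:ℝ) - d)).ennreal_ofReal)).indicator measurableSet_ball
  -- pointwise bound
  have hpt : ∀ z ∈ S, ENNReal.ofReal (f z) ≤ g1 z + g2 z := by
    intro z hz
    have hz0 : 0 < ‖z‖ := hR.trans hz
    rcases le_or_gt (‖z‖ / 2) ‖w - z‖ with hcase | hcase
    · refine le_trans ?_ le_self_add
      show ENNReal.ofReal (f z) ≤ ENNReal.ofReal c1 * ENNReal.ofReal (‖z‖ ^ (-(d:ℝ) - γ))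
      rw [← ENNReal.ofReal_mul hc10.le]
      apply ENNReal.ofReal_le_ofReal
      have h1 : ‖w - z‖ ^ ((2:ℝ) - d) ≤ (‖z‖ / 2) ^ ((2:ℝ) - d) :=
        Real.rpow_le_rpow_of_nonpos (by positivity) hcase (by linarith)
      have h2 : (‖z‖ / 2) ^ ((2:ℝ) - d) = c1 * ‖z‖ ^ ((2:ℝ) - d) := by
        rw [Real.div_rpow (norm_nonneg z) (by norm_num : (0:ℝ) ≤ 2), div_eq_mul_inv,
          ← Real.rpow_neg (by norm_num : (0:ℝ) ≤ 2), hc1]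
        rw [show -((2:ℝ) - d) = (d:ℝ) - 2 by ring]
        ring
      calc f z ≤ (‖z‖ / 2) ^ ((2:ℝ) - d) * ‖z‖ ^ (-2 - γ) :=
            mul_le_mul_of_nonneg_right h1 (Real.rpow_nonneg (norm_nonneg _) _)
        _ = c1 * (‖z‖ ^ ((2:ℝ) - d) * ‖z‖ ^ (-2 - γ)) := by rw [h2]; ring
        _ = c1 * ‖z‖ ^ (-(d:ℝ) - γ) := by
            rw [← Real.rpow_add hz0]
            congr 1
            ring
    · -- near w
      have hzw : ‖w - z‖ < ‖z‖ / 2 := hcase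
      have hup : ‖z‖ ≤ ‖w - z‖ + ‖w‖ := by
        calc ‖z‖ = ‖-(w - z) + w‖ := by congr 1; abel
          _ ≤ ‖-(w - z)‖ + ‖w‖ := norm_add_le _ _
          _ = ‖w - z‖ + ‖w‖ := by rw [norm_neg]
      have hlow' : ‖w‖ ≤ ‖w - z‖ + ‖z‖ := by
        calc ‖w‖ = ‖(w - z) + z‖ := by congr 1; abel
          _ ≤ ‖w - z‖ + ‖z‖ := norm_add_le _ _
      have hball : z ∈ ball w ‖w‖ := by
        rw [mem_ball, dist_eq_norm, ← norm_sub_rev w z]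
        linarith
      have hlow : (2/3:ℝ) * ‖w‖ ≤ ‖z‖ := by linarith
      have h3 : ‖z‖ ^ (-2 - γ) ≤ ((2/3:ℝ) * ‖w‖) ^ (-2 - γ) :=
        Real.rpow_le_rpow_of_nonpos (by positivity) hlow (by linarith)
      refine le_trans ?_ le_add_self
      show ENNReal.ofReal (f z) ≤ (ball w ‖w‖).indicator
        (fun z => ENNReal.ofReal c2 * ENNReal.ofReal (‖w - z‖ ^ ((2:ℝ) - d))) z
      rw [Set.indicator_of_mem hball]
      rw [← ENNReal.ofReal_mul hc20.le]
      apply ENNReal.ofReal_le_ofReal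
      calc f z ≤ ‖w - z‖ ^ ((2:ℝ) - d) * c2 :=
            mul_le_mul_of_nonneg_left h3 (Real.rpow_nonneg (norm_nonneg _) _)
        _ = c2 * ‖w - z‖ ^ ((2:ℝ) - d) := mul_comm _ _
  -- pass to lintegral
  rw [integral_eq_lintegral_of_nonneg_ae (ae_of_all _ hf_nonneg)
    hf_meas.aestronglyMeasurable]
  apply ENNReal.toReal_le_of_le_ofReal (by positivity)
  -- main estimate
  have hterm1 : ∫⁻ z in S, g1 z ∂volume = ENNReal.ofReal c1 * (T * ENNReal.ofReal (R ^ (-γ) / γ)) := by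
    rw [hg1, lintegral_const_mul _ ((by fun_prop : Measurable fun z : EuclideanSpace ℝ (Fin d) =>
      ‖z‖ ^ (-(d:ℝ) - γ)).ennreal_ofReal), aux_tail d hd γ R hγ hR]
  have hterm2 : ∫⁻ z in S, g2 z ∂volume ≤ ENNReal.ofReal c2 * (T * ENNReal.ofReal (‖w‖ * ‖w‖)) := by
    calc ∫⁻ z in S, g2 z ∂volume ≤ ∫⁻ z, g2 z ∂volume := setLIntegral_le_lintegral _ _
      _ = ∫⁻ z in ball w ‖w‖,
            ENNReal.ofReal c2 * ENNReal.ofReal (‖w - z‖ ^ ((2:ℝ) - d)) ∂volume := by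
          rw [hg2, lintegral_indicator measurableSet_ball]
      _ = ENNReal.ofReal c2 * ∫⁻ z in ball w ‖w‖,
            ENNReal.ofReal (‖w - z‖ ^ ((2:ℝ) - d)) ∂volume := by
          rw [lintegral_const_mul _ ((by fun_prop : Measurable fun z : EuclideanSpace ℝ (Fin d) =>
            ‖w - z‖ ^ ((2:ℝ) - d)).ennreal_ofReal)]
      _ = ENNReal.ofReal c2 * ∫⁻ z in ball (0 : EuclideanSpace ℝ (Fin d)) ‖w‖,
            ENNReal.ofReal (‖z‖ ^ ((2:ℝ) - d)) ∂volume := by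
          congr 1
          have hmp : MeasurePreserving (fun z : EuclideanSpace ℝ (Fin d) => w - z)
              volume volume := measurePreserving_sub_left volume w
          have hemb : MeasurableEmbedding (fun z : EuclideanSpace ℝ (Fin d) => w - z) :=
            (MeasurableEquiv.subLeft w).measurableEmbedding
          have hpre : (fun z : EuclideanSpace ℝ (Fin d) => w - z) ⁻¹'
              (ball (0 : EuclideanSpace ℝ (Fin d)) ‖w‖) = ball w ‖w‖ := by
            ext z
            simp [mem_ball, dist_eq_norm, norm_sub_rev]
          rw [← hpre]
          exact hmp.setLIntegral_comp_preimage_emb hemb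
            (fun y => ENNReal.ofReal (‖y‖ ^ ((2:ℝ) - d))) _
      _ ≤ ENNReal.ofReal c2 * (T * ENNReal.ofReal (‖w‖ * ‖w‖)) :=
          mul_le_mul_right (aux_ball d hd ‖w‖ hw0) _
  calc ∫⁻ z in S, ENNReal.ofReal (f z) ∂volume
      ≤ ∫⁻ z in S, (g1 z + g2 z) ∂volume := setLIntegral_mono (hg1m.add hg2m) hpt
    _ = ∫⁻ z in S, g1 z ∂volume + ∫⁻ z in S, g2 z ∂volume := lintegral_add_left hg1m _
    _ ≤ ENNReal.ofReal c1 * (T * ENNReal.ofReal (R ^ (-γ) / γ)) +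
        ENNReal.ofReal c2 * (T * ENNReal.ofReal (‖w‖ * ‖w‖)) := by
        rw [hterm1]; exact add_le_add_right hterm2 _
    _ ≤ ENNReal.ofReal ((t * (c1 / γ + A) + 1) * R ^ (-γ)) := by
        rw [hTt, ← ENNReal.ofReal_mul ht0, ← ENNReal.ofReal_mul ht0,
          ← ENNReal.ofReal_mul hc10.le, ← ENNReal.ofReal_mul hc20.le,
          ← ENNReal.ofReal_add (by positivity) (by positivity)]
        apply ENNReal.ofReal_le_ofReal
        have e1 : c2 * (t * (‖w‖ * ‖w‖)) = t * ((2/3:ℝ) ^ (-2 - γ) * ‖w‖ ^ (-γ)) := by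
          rw [hc2, Real.mul_rpow (by norm_num) (norm_nonneg w)]
          have : ‖w‖ ^ (-2 - γ) * (‖w‖ * ‖w‖) = ‖w‖ ^ (-γ) := by
            rw [show ‖w‖ * ‖w‖ = ‖w‖ ^ ((2:ℕ):ℝ) by
              rw [Real.rpow_natCast]; ring]
            rw [← Real.rpow_add hw0]
            congr 1
            push_cast
            ring
          calc (2/3:ℝ) ^ (-2 - γ) * ‖w‖ ^ (-2 - γ) * (t * (‖w‖ * ‖w‖))
              = t * ((2/3:ℝ) ^ (-2 - γ) * (‖w‖ ^ (-2 - γ) * (‖w‖ * ‖w‖))) := by ring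
            _ = t * ((2/3:ℝ) ^ (-2 - γ) * ‖w‖ ^ (-γ)) := by rw [this]
        have e2 : ‖w‖ ^ (-γ) ≤ (2 * R) ^ (-γ) :=
          Real.rpow_le_rpow_of_nonpos (by positivity) hw (by linarith)
        have e3 : ((2:ℝ) * R) ^ (-γ) = 2 ^ (-γ) * R ^ (-γ) :=
          Real.mul_rpow (by norm_num) hR.le
        have e4 : c1 * (t * (R ^ (-γ) / γ)) = t * (c1 / γ) * R ^ (-γ) := by ring
        have key : t * ((2/3:ℝ) ^ (-2 - γ) * ‖w‖ ^ (-γ)) ≤ t * A * R ^ (-γ) := by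
          rw [hA]
          calc t * ((2/3:ℝ) ^ (-2 - γ) * ‖w‖ ^ (-γ))
              ≤ t * ((2/3:ℝ) ^ (-2 - γ) * (2 ^ (-γ) * R ^ (-γ))) := by
                apply mul_le_mul_of_nonneg_left _ ht0
                apply mul_le_mul_of_nonneg_left _ (Real.rpow_nonneg (by norm_num) _)
                rw [← e3]; exact e2
            _ = t * ((2/3:ℝ) ^ (-2 - γ) * 2 ^ (-γ)) * R ^ (-γ) := by ring
        rw [e1, e4]
        nlinarith [hRγ]

end Aux

end
end

section
/- Let γ > 0. There exists a constant C > 0 such that for all R ≥ 1, all t ≥ R², and all w ∈ ℝ² with |w| ≥ 2R: ∫₀^t ∫_{|z|>R} ψ_{2,R}(s,|w|)·ψ_{2,R}(s,|z|)·ψ_{2,R}(t,|z|)·|z|^{-2-γ} dz ds ≤ C·t·ψ_{2,R}(t,|w|)/R^γ. -/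
open MeasureTheory

noncomputable section

/-- `Log r := log(e - 1 + r)`. -/
def LLog (r : ℝ) : ℝ := Real.log (Real.exp 1 - 1 + r)

/-- `ψ_{2,R}(t,r) := min(1, (min(r-R,R)·Log((r-R)/R)) / (min(√t,R)·Log(√t/R)))`. -/
def psi2 (R t r : ℝ) : ℝ :=
  min 1 ((min (r - R) R * LLog ((r - R) / R)) /
    (min (Real.sqrt t) R * LLog (Real.sqrt t / R)))

open Real Set

lemma two_lt_exp_one : (2:ℝ) < Real.exp 1 := by
  have := Real.exp_one_gt_d9; norm_num at this; linarith

lemma LLog_nonneg {x : ℝ} (hx : 0 ≤ x) : 0 ≤ LLog x := by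
  have := two_lt_exp_one
  exact Real.log_nonneg (by linarith)

lemma one_le_LLog {x : ℝ} (hx : 1 ≤ x) : 1 ≤ LLog x := by
  unfold LLog
  have h2 := Real.log_le_log (Real.exp_pos 1)
    (show Real.exp 1 ≤ Real.exp 1 - 1 + x by linarith)
  rwa [Real.log_exp] at h2

lemma LLog_pos {x : ℝ} (hx : 0 ≤ x) : 0 < LLog x := by
  have := two_lt_exp_one
  exact Real.log_pos (by linarith)

lemma psi2_nonneg {R r : ℝ} (hR : 0 < R) (hr : R ≤ r) (s : ℝ) : 0 ≤ psi2 R s r := by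
  unfold psi2
  refine le_min zero_le_one (div_nonneg ?_ ?_)
  · exact mul_nonneg (le_min (by linarith) hR.le)
      (LLog_nonneg (div_nonneg (by linarith) hR.le))
  · exact mul_nonneg (le_min (Real.sqrt_nonneg _) hR.le)
      (LLog_nonneg (div_nonneg (Real.sqrt_nonneg _) hR.le))

lemma psi2_le_one (R s r : ℝ) : psi2 R s r ≤ 1 := min_le_left _ _

lemma measurable_psi2 (R r : ℝ) : Measurable (fun s => psi2 R s r) := by
  unfold psi2 LLog
  have hs : Measurable Real.sqrt := Real.continuous_sqrt.measurable
  exact measurable_const.min (measurable_const.div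
    (((hs.min measurable_const)).mul
      (Real.measurable_log.comp (measurable_const.add (hs.div_const R)))))

lemma integrableOn_psi2 {R r : ℝ} (hR : 0 < R) (hr : R ≤ r) (t₁ t₂ : ℝ) :
    IntegrableOn (fun s => psi2 R s r) (Set.Ioc t₁ t₂) := by
  have hc : IntegrableOn (fun _ : ℝ => (1:ℝ)) (Set.Ioc t₁ t₂) :=
    integrableOn_const measure_Ioc_lt_top.ne
  refine hc.mono' ((measurable_psi2 R r).aestronglyMeasurable) ?_
  filter_upwards with s
  rw [Real.norm_eq_abs, abs_of_nonneg (psi2_nonneg hR hr s)]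
  exact psi2_le_one R s r

/-- `ψ(t, r)` in the regime `√t ≥ R`, `r ≥ 2R`. -/
lemma psi2_eq {R t r : ℝ} (hR : 0 < R) (hst : R ≤ Real.sqrt t) (hr : 2 * R ≤ r) :
    psi2 R t r = min 1 (LLog ((r - R) / R) / LLog (Real.sqrt t / R)) := by
  unfold psi2
  rw [min_eq_right hst, min_eq_right (by linarith : R ≤ r - R),
    mul_div_mul_left _ _ (ne_of_gt hR)]

set_option maxHeartbeats 1000000 in
/-- Main time-integral estimate. -/
lemma integral_psi2_le {R t r : ℝ} (hR : 1 ≤ R) (ht : R ^ 2 ≤ t) (hr : 2 * R ≤ r) :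
    ∫ s in Set.Ioc (0:ℝ) t, psi2 R s r ≤ 5 * (t * psi2 R t r) := by
  have hR0 : 0 < R := lt_of_lt_of_le one_pos hR
  have ht0 : 0 < t := lt_of_lt_of_le (by positivity) ht
  have hsqt : R ≤ Real.sqrt t := (Real.le_sqrt hR0.le ht0.le).2 ht
  set a := LLog ((r - R) / R) with ha_def
  set LU := LLog (Real.sqrt t / R) with hLU_def
  have ha1 : 1 ≤ a := one_le_LLog (by rw [le_div_iff₀ hR0]; linarith)
  have hLU1 : 1 ≤ LU := one_le_LLog (by rw [le_div_iff₀ hR0]; linarith)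
  have hLU0 : 0 < LU := by linarith
  have hpsit : psi2 R t r = min 1 (a / LU) := psi2_eq hR0 hsqt hr
  by_cases hcase : LU ≤ a
  · -- ψ(t,r) = 1, bound integral by t
    have h1 : psi2 R t r = 1 := by
      rw [hpsit, min_eq_left ((one_le_div hLU0).2 hcase)]
    rw [h1, mul_one]
    have : ∫ s in Set.Ioc (0:ℝ) t, psi2 R s r ≤ ∫ _ in Set.Ioc (0:ℝ) t, (1:ℝ) := by
      refine setIntegral_mono_on (integrableOn_psi2 hR0 (by linarith) _ _)
        (integrableOn_const measure_Ioc_lt_top.ne) measurableSet_Ioc ?_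
      intro s _; exact psi2_le_one R s r
    rw [setIntegral_const, Real.volume_real_Ioc_of_le (by linarith), smul_eq_mul, mul_one] at this
    linarith
  · push_neg at hcase
    have hpsit2 : psi2 R t r = a / LU := by
      rw [hpsit, min_eq_right ((div_le_one hLU0).2 hcase.le)]
    rw [hpsit2]
    have hsplit : ∫ s in Set.Ioc (0:ℝ) t, psi2 R s r
        = (∫ s in Set.Ioc (0:ℝ) (R^2), psi2 R s r)
          + ∫ s in Set.Ioc (R^2) t, psi2 R s r := by
      rw [← setIntegral_union (Set.Ioc_disjoint_Ioc_of_le le_rfl) measurableSet_Ioc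
        (integrableOn_psi2 hR0 (by linarith) _ _) (integrableOn_psi2 hR0 (by linarith) _ _),
        Set.Ioc_union_Ioc_eq_Ioc (by positivity) ht]
    -- Bound on (0, R²]
    have hA : ∫ s in Set.Ioc (0:ℝ) (R^2), psi2 R s r ≤ R^2 := by
      have : ∫ s in Set.Ioc (0:ℝ) (R^2), psi2 R s r ≤ ∫ _ in Set.Ioc (0:ℝ) (R^2), (1:ℝ) := by
        refine setIntegral_mono_on (integrableOn_psi2 hR0 (by linarith) _ _)
          (integrableOn_const measure_Ioc_lt_top.ne) measurableSet_Ioc ?_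
        intro s _; exact psi2_le_one R s r
      rw [setIntegral_const, Real.volume_real_Ioc_of_le (by nlinarith [sq_nonneg R]), smul_eq_mul, mul_one] at this
      linarith
    have hRsqle : R^2 ≤ 3 * t * (a / LU) := by
      have hu2 : (Real.sqrt t / R)^2 = t / R^2 := by
        rw [div_pow, Real.sq_sqrt ht0.le]
      have hu1 : 1 ≤ Real.sqrt t / R := by rw [le_div_iff₀ hR0]; linarith
      have hLUle : LU ≤ 3 * (t / R^2) := by
        have harg : (0:ℝ) ≤ Real.exp 1 - 1 + Real.sqrt t / R := by
          have h5 := two_lt_exp_one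
          have h6 : (0:ℝ) ≤ Real.sqrt t / R := div_nonneg (Real.sqrt_nonneg t) hR0.le
          linarith
        have h1 : LU ≤ Real.exp 1 - 1 + Real.sqrt t / R := Real.log_le_self harg
        have h2 : Real.exp 1 - 1 + Real.sqrt t / R ≤ 3 * (Real.sqrt t / R)^2 := by
          nlinarith [Real.exp_one_lt_d9, hu1, sq_nonneg (Real.sqrt t / R - 1)]
        rw [hu2] at h2; linarith
      rw [← mul_div_assoc, le_div_iff₀ hLU0]
      have h3 : R^2 * LU ≤ 3 * t := by
        have h4 := mul_le_mul_of_nonneg_left hLUle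
          (le_of_lt (show (0:ℝ) < R^2 by positivity))
        have h5 : R^2 * (3 * (t / R^2)) = 3 * t := by field_simp
        linarith [h4, h5.le, h5.ge]
      nlinarith [h3, ht0, ha1]
    -- Bound on (R², t]
    have hB : ∫ s in Set.Ioc (R^2) t, psi2 R s r ≤ (3/2) * t * (a / LU) := by
      set g : ℝ → ℝ := fun s => (a / LU) * (1 + (Real.log t - Real.log s) / 2) with hg_def
      have hgcont : ContinuousOn g (Set.Icc (R^2) t) := by
        apply ContinuousOn.mul continuousOn_const
        apply ContinuousOn.add continuousOn_const
        apply ContinuousOn.div_const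
        apply ContinuousOn.sub continuousOn_const
        exact Real.continuousOn_log.mono (fun x hx => by
          simp only [Set.mem_compl_iff, Set.mem_singleton_iff]
          have : (0:ℝ) < R^2 := by positivity
          intro h; rw [h] at hx; exact absurd hx.1 (by linarith))
      have hgint : IntegrableOn g (Set.Ioc (R^2) t) :=
        (hgcont.integrableOn_Icc).mono_set Set.Ioc_subset_Icc_self
      have hstep1 : ∫ s in Set.Ioc (R^2) t, psi2 R s r ≤ ∫ s in Set.Ioc (R^2) t, g s := by
        refine setIntegral_mono_on (integrableOn_psi2 hR0 (by linarith) _ _) hgint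
          measurableSet_Ioc ?_
        intro s hs
        have hs0 : 0 < s := lt_of_le_of_lt (by positivity) hs.1
        have hsqs : R ≤ Real.sqrt s := (Real.le_sqrt hR0.le hs0.le).2 hs.1.le
        set Lv := LLog (Real.sqrt s / R) with hLv_def
        have hv1 : 1 ≤ Real.sqrt s / R := by rw [le_div_iff₀ hR0]; linarith
        have hLv1 : 1 ≤ Lv := one_le_LLog hv1
        have hLv0 : 0 < Lv := by linarith
        have hle : psi2 R s r ≤ a / Lv := by
          rw [psi2_eq hR0 hsqs hr]; exact min_le_right _ _
        have hvu : Real.sqrt s / R ≤ Real.sqrt t / R := by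
          gcongr
          exact hs.2
        have hlog : Real.log t - Real.log s = 2 * (Real.log (Real.sqrt t / R) - Real.log (Real.sqrt s / R)) := by
          rw [Real.log_div (by positivity) (ne_of_gt hR0),
            Real.log_div (by positivity) (ne_of_gt hR0),
            Real.log_sqrt ht0.le, Real.log_sqrt hs0.le]
          ring
        have hX0 : 0 ≤ (Real.log t - Real.log s) / 2 := by
          have := Real.log_le_log hs0 hs.2; linarith
        have hkey : LU ≤ Lv * (1 + (Real.log t - Real.log s) / 2) := by
          have hmul : Real.exp 1 - 1 + Real.sqrt t / R
              ≤ (Real.exp 1 - 1 + Real.sqrt s / R) * ((Real.sqrt t / R) / (Real.sqrt s / R)) := by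
            have hvpos : 0 < Real.sqrt s / R := by linarith
            have hdivge : 1 ≤ (Real.sqrt t / R) / (Real.sqrt s / R) :=
              (one_le_div hvpos).2 hvu
            have hexp : (0:ℝ) < Real.exp 1 - 1 := by have := two_lt_exp_one; linarith
            have : (Real.exp 1 - 1 + Real.sqrt s / R) * ((Real.sqrt t / R) / (Real.sqrt s / R))
                = (Real.exp 1 - 1) * ((Real.sqrt t / R) / (Real.sqrt s / R)) + Real.sqrt t / R := by
              field_simp
            rw [this]
            nlinarith
          have h1 : LU ≤ Lv + (Real.log (Real.sqrt t / R) - Real.log (Real.sqrt s / R)) := by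
            have hvpos : 0 < Real.sqrt s / R := by linarith
            have hupos : 0 < Real.sqrt t / R := by linarith
            have hepos : (0:ℝ) < Real.exp 1 - 1 + Real.sqrt t / R := by
              have := two_lt_exp_one; linarith
            calc LU = Real.log (Real.exp 1 - 1 + Real.sqrt t / R) := rfl
            _ ≤ Real.log ((Real.exp 1 - 1 + Real.sqrt s / R) * ((Real.sqrt t / R) / (Real.sqrt s / R))) :=
              Real.log_le_log hepos hmul
            _ = Lv + Real.log ((Real.sqrt t / R) / (Real.sqrt s / R)) := by
              have hne1 : Real.exp 1 - 1 + Real.sqrt s / R ≠ 0 := by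
                have h8 := two_lt_exp_one
                have h9 : (0:ℝ) ≤ Real.sqrt s / R := by positivity
                intro hc
                linarith [hc.ge, hc.le]
              have hne2 : (Real.sqrt t / R) / (Real.sqrt s / R) ≠ 0 :=
                ne_of_gt (by positivity)
              rw [Real.log_mul hne1 hne2]; rfl
            _ = Lv + (Real.log (Real.sqrt t / R) - Real.log (Real.sqrt s / R)) := by
              rw [Real.log_div (by positivity) (by positivity)]
          have h2 : Real.log (Real.sqrt t / R) - Real.log (Real.sqrt s / R)
              = (Real.log t - Real.log s) / 2 := by rw [hlog]; ring
          rw [h2] at h1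
          nlinarith [mul_nonneg (show (0:ℝ) ≤ Lv - 1 by linarith) hX0]
        calc psi2 R s r ≤ a / Lv := hle
        _ ≤ g s := by
          rw [hg_def]
          simp only
          rw [div_mul_eq_mul_div, div_le_div_iff₀ hLv0 hLU0]
          have h3 : a * LU ≤ a * (Lv * (1 + (Real.log t - Real.log s) / 2)) :=
            mul_le_mul_of_nonneg_left hkey (by linarith)
          nlinarith [h3]
      have hstep2 : ∫ s in Set.Ioc (R^2) t, g s ≤ (3/2) * t * (a / LU) := by
        have hIoc : ∫ s in Set.Ioc (R^2) t, g s = ∫ s in (R^2)..t, g s :=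
          (intervalIntegral.integral_of_le ht).symm
        rw [hIoc, hg_def]
        have hlogint : IntervalIntegrable Real.log volume (R^2) t := by
          apply intervalIntegral.intervalIntegrable_log
          rw [Set.uIcc_of_le ht]
          intro h0
          have h9 : (0:ℝ) < R^2 := by positivity
          linarith [h0.1]
        have hconst : IntervalIntegrable (fun _ : ℝ => 1 + Real.log t / 2) volume (R^2) t :=
          intervalIntegrable_const
        have heq : ∫ s in (R^2)..t, (a / LU) * (1 + (Real.log t - Real.log s) / 2)
            = (a / LU) * ((t - R^2) * (1 + Real.log t / 2)
              - (t * Real.log t - R^2 * Real.log (R^2) - t + R^2) / 2) := by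
          rw [intervalIntegral.integral_const_mul]
          congr 1
          have : (fun s => 1 + (Real.log t - Real.log s) / 2)
              = fun s => (1 + Real.log t / 2) - (1/2) * Real.log s := by
            funext s; ring
          rw [this, intervalIntegral.integral_sub hconst (hlogint.const_mul _),
            intervalIntegral.integral_const, intervalIntegral.integral_const_mul,
            integral_log]
          simp only [smul_eq_mul]
          ring
        rw [heq]
        have hfinal : (t - R^2) * (1 + Real.log t / 2)
            - (t * Real.log t - R^2 * Real.log (R^2) - t + R^2) / 2 ≤ (3/2) * t := by
          have hlogmono : Real.log (R^2) ≤ Real.log t := Real.log_le_log (by positivity) ht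
          nlinarith [sq_nonneg R, ht0]
        have haLU : 0 < a / LU := div_pos (by linarith) hLU0
        calc (a / LU) * ((t - R^2) * (1 + Real.log t / 2)
              - (t * Real.log t - R^2 * Real.log (R^2) - t + R^2) / 2)
            ≤ (a / LU) * ((3/2) * t) := by
              exact mul_le_mul_of_nonneg_left hfinal haLU.le
        _ = (3/2) * t * (a / LU) := by ring
      linarith
    have haLU0 : 0 ≤ a / LU := by positivity
    nlinarith [hA, hB, hsplit, mul_nonneg ht0.le haLU0]

end

section Zint

abbrev E2 := EuclideanSpace ℝ (Fin 2)

lemma measurableSet_normgt (R : ℝ) : MeasurableSet {z : E2 | R < ‖z‖} :=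
  (isOpen_lt continuous_const continuous_norm).measurableSet

lemma integrableOn_rpow_norm {γ : ℝ} (hγ : 0 < γ) :
    IntegrableOn (fun z : E2 => ‖z‖ ^ (-2 - γ)) {z : E2 | 1 < ‖z‖} := by
  have hfin : (Module.finrank ℝ E2 : ℝ) < 2 + γ := by
    rw [finrank_euclideanSpace_fin]; push_cast; linarith
  have hint : Integrable (fun z : E2 => (1 + ‖z‖) ^ (-(2 + γ))) volume :=
    integrable_one_add_norm hfin
  have hint2 : Integrable (fun z : E2 => (2:ℝ) ^ (2 + γ) * (1 + ‖z‖) ^ (-(2 + γ))) volume :=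
    hint.const_mul _
  refine (hint2.restrict).mono' ?_ ?_
  · exact Measurable.aestronglyMeasurable (by fun_prop)
  · rw [ae_restrict_iff' (measurableSet_normgt 1)]
    filter_upwards with z hz
    have hz1 : (1:ℝ) < ‖z‖ := hz
    have hz0 : (0:ℝ) < ‖z‖ := lt_trans one_pos hz1
    have h2 : (0:ℝ) < 1 + ‖z‖ := by linarith
    rw [Real.norm_eq_abs, abs_of_nonneg (Real.rpow_nonneg (norm_nonneg z) _)]
    have hexp : (-2 - γ : ℝ) = -(2 + γ) := by ring
    rw [hexp]
    have hstep : (2 * ‖z‖ : ℝ) ^ (-(2 + γ)) ≤ (1 + ‖z‖) ^ (-(2 + γ)) := by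
      apply Real.rpow_le_rpow_of_nonpos h2 (by linarith) (by linarith)
    have hmul : (2 * ‖z‖ : ℝ) ^ (-(2 + γ)) = (2:ℝ) ^ (-(2 + γ)) * ‖z‖ ^ (-(2 + γ)) :=
      Real.mul_rpow (by norm_num) (norm_nonneg z)
    rw [hmul] at hstep
    have h2pos : (0:ℝ) < (2:ℝ) ^ (2 + γ) := Real.rpow_pos_of_pos two_pos _
    have h2inv : (2:ℝ) ^ (-(2 + γ)) = ((2:ℝ) ^ (2 + γ))⁻¹ := by
      rw [Real.rpow_neg (by norm_num)]
    rw [h2inv] at hstep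
    calc ‖z‖ ^ (-(2 + γ)) = (2:ℝ) ^ (2 + γ) * (((2:ℝ) ^ (2 + γ))⁻¹ * ‖z‖ ^ (-(2 + γ))) := by
          field_simp
    _ ≤ (2:ℝ) ^ (2 + γ) * (1 + ‖z‖) ^ (-(2 + γ)) := by
          apply mul_le_mul_of_nonneg_left hstep h2pos.le

lemma setIntegral_rpow_norm_eq {γ R : ℝ} (hR : 0 < R) :
    ∫ z in {z : E2 | R < ‖z‖}, ‖z‖ ^ (-2 - γ) =
      (∫ z in {z : E2 | 1 < ‖z‖}, ‖z‖ ^ (-2 - γ)) / R ^ γ := by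
  set f : E2 → ℝ := Set.indicator {y : E2 | 1 < ‖y‖} (fun y => ‖y‖ ^ (-2 - γ)) with hf
  have hcomp : ∀ x : E2, f (R⁻¹ • x)
      = Set.indicator {x : E2 | R < ‖x‖} (fun x => R ^ (2 + γ) * ‖x‖ ^ (-2 - γ)) x := by
    intro x
    have hnorm : ‖R⁻¹ • x‖ = R⁻¹ * ‖x‖ := by
      rw [norm_smul, Real.norm_eq_abs, abs_of_pos (by positivity)]
    by_cases hx : R < ‖x‖
    · have hmem : R⁻¹ • x ∈ {y : E2 | 1 < ‖y‖} := by
        simp only [Set.mem_setOf_eq, hnorm]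
        rw [inv_mul_eq_div, lt_div_iff₀ hR, one_mul]
        exact hx
      rw [hf, Set.indicator_of_mem hmem,
        Set.indicator_of_mem (show x ∈ {x : E2 | R < ‖x‖} from hx), hnorm,
        Real.mul_rpow (inv_nonneg.2 hR.le) (norm_nonneg x), Real.inv_rpow hR.le,
        show (-2 - γ : ℝ) = -(2 + γ) by ring, Real.rpow_neg hR.le, inv_inv]
    · have hmem : R⁻¹ • x ∉ {y : E2 | 1 < ‖y‖} := by
        simp only [Set.mem_setOf_eq, hnorm, not_lt]
        rw [inv_mul_eq_div, div_le_one hR]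
        exact not_lt.1 hx
      rw [hf, Set.indicator_of_notMem hmem,
        Set.indicator_of_notMem (show x ∉ {x : E2 | R < ‖x‖} from hx)]
  have hscale := MeasureTheory.Measure.integral_comp_inv_smul_of_nonneg
    (volume : Measure E2) f hR.le
  simp_rw [hcomp] at hscale
  rw [MeasureTheory.integral_indicator (measurableSet_normgt R),
    MeasureTheory.integral_const_mul] at hscale
  rw [hf, MeasureTheory.integral_indicator (measurableSet_normgt 1)] at hscale
  rw [finrank_euclideanSpace_fin, smul_eq_mul] at hscale
  have hpow : R ^ (2 + γ : ℝ) = R ^ (2:ℕ) * R ^ γ := by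
    rw [show (2 + γ : ℝ) = ((2:ℕ):ℝ) + γ by norm_num, Real.rpow_add hR,
      Real.rpow_natCast]
  rw [hpow] at hscale
  have hRγ : (0:ℝ) < R ^ γ := Real.rpow_pos_of_pos hR γ
  have hR2 : (0:ℝ) < R ^ (2:ℕ) := by positivity
  field_simp
  nlinarith [hscale]

end Zint

theorem stmt14 (γ : ℝ) (hγ : 0 < γ) :
    ∃ C : ℝ, 0 < C ∧ ∀ R : ℝ, 1 ≤ R → ∀ t : ℝ, R ^ 2 ≤ t →
      ∀ w : EuclideanSpace ℝ (Fin 2), 2 * R ≤ ‖w‖ →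
        ∫ s in Set.Ioc (0 : ℝ) t, ∫ z in {z : EuclideanSpace ℝ (Fin 2) | R < ‖z‖},
            psi2 R s ‖w‖ * psi2 R s ‖z‖ * psi2 R t ‖z‖ * ‖z‖ ^ (-2 - γ) ≤
          C * t * psi2 R t ‖w‖ / R ^ γ := by
  set K₁ := ∫ z in {z : E2 | 1 < ‖z‖}, ‖z‖ ^ (-2 - γ) with hK₁def
  have hK₁0 : 0 ≤ K₁ := setIntegral_nonneg (measurableSet_normgt 1)
    (fun z _ => Real.rpow_nonneg (norm_nonneg z) _)
  refine ⟨5 * K₁ + 1, by positivity, ?_⟩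
  intro R hR t ht w hw
  have hR0 : 0 < R := lt_of_lt_of_le one_pos hR
  have ht0 : 0 < t := lt_of_lt_of_le (by positivity) ht
  have hwR : R ≤ ‖w‖ := by linarith
  have hS : MeasurableSet {z : E2 | R < ‖z‖} := measurableSet_normgt R
  have hKint : IntegrableOn (fun z : E2 => ‖z‖ ^ (-2 - γ)) {z : E2 | R < ‖z‖} :=
    (integrableOn_rpow_norm hγ).mono_set (fun z hz => lt_of_le_of_lt hR hz)
  set K := ∫ z in {z : E2 | R < ‖z‖}, ‖z‖ ^ (-2 - γ) with hKdef
  have hK0 : 0 ≤ K := setIntegral_nonneg hS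
    (fun z _ => Real.rpow_nonneg (norm_nonneg z) _)
  have hψtw : 0 ≤ psi2 R t ‖w‖ := psi2_nonneg hR0 hwR t
  -- inner bound
  have hinner : ∀ s : ℝ, s ∈ Set.Ioc (0:ℝ) t →
      (∫ z in {z : E2 | R < ‖z‖},
        psi2 R s ‖w‖ * psi2 R s ‖z‖ * psi2 R t ‖z‖ * ‖z‖ ^ (-2 - γ))
        ≤ psi2 R s ‖w‖ * K := by
    intro s _
    have hmono := integral_mono_of_nonneg
      (f := fun z : E2 => psi2 R s ‖w‖ * psi2 R s ‖z‖ * psi2 R t ‖z‖ * ‖z‖ ^ (-2 - γ))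
      (g := fun z : E2 => psi2 R s ‖w‖ * ‖z‖ ^ (-2 - γ))
      (μ := volume.restrict {z : E2 | R < ‖z‖})
      ?_ (hKint.const_mul _) ?_
    · rw [hKdef, ← MeasureTheory.integral_const_mul]
      exact hmono
    · refine (ae_restrict_iff' hS).2 (ae_of_all _ (fun z hz => ?_))
      have h1 := psi2_nonneg hR0 hwR s
      have h2 := psi2_nonneg hR0 (le_of_lt hz) s
      have h3 := psi2_nonneg hR0 (le_of_lt hz) t
      have h4 : (0:ℝ) ≤ ‖z‖ ^ (-2 - γ) := Real.rpow_nonneg (norm_nonneg z) _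
      positivity
    · refine (ae_restrict_iff' hS).2 (ae_of_all _ (fun z hz => ?_))
      have h1 := psi2_nonneg hR0 hwR s
      have h2 := psi2_nonneg hR0 (le_of_lt hz) s
      have h3 := psi2_nonneg hR0 (le_of_lt hz) t
      have h4 : (0:ℝ) ≤ ‖z‖ ^ (-2 - γ) := Real.rpow_nonneg (norm_nonneg z) _
      have h5 := psi2_le_one R s ‖z‖
      have h6 := psi2_le_one R t ‖z‖
      have hbc : psi2 R s ‖z‖ * psi2 R t ‖z‖ ≤ 1 := by nlinarith
      dsimp only
      calc psi2 R s ‖w‖ * psi2 R s ‖z‖ * psi2 R t ‖z‖ * ‖z‖ ^ (-2 - γ)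
          = (psi2 R s ‖w‖ * ‖z‖ ^ (-2 - γ)) * (psi2 R s ‖z‖ * psi2 R t ‖z‖) := by ring
      _ ≤ (psi2 R s ‖w‖ * ‖z‖ ^ (-2 - γ)) * 1 :=
          mul_le_mul_of_nonneg_left hbc (mul_nonneg h1 h4)
      _ = psi2 R s ‖w‖ * ‖z‖ ^ (-2 - γ) := mul_one _
  -- outer bound
  have houter : (∫ s in Set.Ioc (0:ℝ) t, ∫ z in {z : E2 | R < ‖z‖},
      psi2 R s ‖w‖ * psi2 R s ‖z‖ * psi2 R t ‖z‖ * ‖z‖ ^ (-2 - γ))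
      ≤ ∫ s in Set.Ioc (0:ℝ) t, psi2 R s ‖w‖ * K := by
    refine integral_mono_of_nonneg ?_ ((integrableOn_psi2 hR0 hwR 0 t).mul_const K) ?_
    · refine (ae_restrict_iff' measurableSet_Ioc).2 (ae_of_all _ (fun s _ => ?_))
      refine setIntegral_nonneg hS (fun z hz => ?_)
      have h1 := psi2_nonneg hR0 hwR s
      have h2 := psi2_nonneg hR0 (le_of_lt hz) s
      have h3 := psi2_nonneg hR0 (le_of_lt hz) t
      have h4 : (0:ℝ) ≤ ‖z‖ ^ (-2 - γ) := Real.rpow_nonneg (norm_nonneg z) _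
      positivity
    · exact (ae_restrict_iff' measurableSet_Ioc).2 (ae_of_all _ hinner)
  have hsum : ∫ s in Set.Ioc (0:ℝ) t, psi2 R s ‖w‖ * K
      = (∫ s in Set.Ioc (0:ℝ) t, psi2 R s ‖w‖) * K := integral_mul_const _ _
  have hsint := integral_psi2_le hR ht hw
  have hKeq : K = K₁ / R ^ γ := setIntegral_rpow_norm_eq hR0
  have hRγ : (0:ℝ) < R ^ γ := Real.rpow_pos_of_pos hR0 γ
  have hchain : (∫ s in Set.Ioc (0:ℝ) t, psi2 R s ‖w‖) * K ≤ 5 * (t * psi2 R t ‖w‖) * K :=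
    mul_le_mul_of_nonneg_right hsint hK0
  have hfinal : 5 * (t * psi2 R t ‖w‖) * K ≤ (5 * K₁ + 1) * t * psi2 R t ‖w‖ / R ^ γ := by
    rw [hKeq, div_eq_mul_inv, div_eq_mul_inv]
    have h0 : (0:ℝ) ≤ t * psi2 R t ‖w‖ := mul_nonneg ht0.le hψtw
    have hinv : (0:ℝ) < (R ^ γ)⁻¹ := by positivity
    nlinarith [mul_nonneg h0 hinv.le]
  calc (∫ s in Set.Ioc (0:ℝ) t, ∫ z in {z : E2 | R < ‖z‖},
      psi2 R s ‖w‖ * psi2 R s ‖z‖ * psi2 R t ‖z‖ * ‖z‖ ^ (-2 - γ))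
      ≤ ∫ s in Set.Ioc (0:ℝ) t, psi2 R s ‖w‖ * K := houter
  _ = (∫ s in Set.Ioc (0:ℝ) t, psi2 R s ‖w‖) * K := hsum
  _ ≤ 5 * (t * psi2 R t ‖w‖) * K := hchain
  _ ≤ (5 * K₁ + 1) * t * psi2 R t ‖w‖ / R ^ γ := hfinal
end
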